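/- Let r ≥ 2 be an integer. There exists a constant C₀ > 0, depending only on r, such that for every lower-triangular r×r complex matrix A (i.e. A_{i,j} = 0 whenever i < j), writing A₁ for the strictly lower-triangular part of A (the matrix obtained from A by replacing its diagonal entries by 0), one has ‖[A,Aᴴ]‖ ≥ C₀·‖A₁‖². -/

import Mathlib

/-- The Frobenius (Hilbert–Schmidt) norm of a complex matrix. -/
noncomputable def frobNorm {r : ℕ} (A : Matrix (Fin r) (Fin r) ℂ) : ℝ :=
  Real.sqrt (∑ i, ∑ j, ‖A i j‖ ^ 2)

/-- there is `C₀ > 0`, depending only on `r`, such that for every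
lower-triangular `r×r` complex matrix `A`, with `A₁` its strictly lower-triangular
part, one has `‖[A,Aᴴ]‖ ≥ C₀·‖A₁‖²`. -/
theorem lower_triangular_commutator_lower_bound (r : ℕ) (hr : 2 ≤ r) :
    ∃ C₀ : ℝ, 0 < C₀ ∧
      ∀ A : Matrix (Fin r) (Fin r) ℂ, (∀ i j : Fin r, i < j → A i j = 0) →
        C₀ * frobNorm (fun i j => if i = j then 0 else A i j) ^ 2
          ≤ frobNorm (A * A.conjTranspose - A.conjTranspose * A) := by
  have hrpos : (0:ℝ) < (r:ℝ) := by
    have : 0 < r := lt_of_lt_of_le (by norm_num) hr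
    exact_mod_cast this
  refine ⟨((r:ℝ)^2)⁻¹, by positivity, ?_⟩
  intro A hA
  set D := A * A.conjTranspose - A.conjTranspose * A with hD
  set a : Fin r → Fin r → ℝ := fun i j => ‖A i j‖ ^ 2 with ha
  set N := frobNorm D with hN
  have hNnn : 0 ≤ N := Real.sqrt_nonneg _
  have hann : ∀ i j, 0 ≤ a i j := fun i j => by positivity
  -- the zero entries
  have haz : ∀ i j : Fin r, i < j → a i j = 0 := by
    intro i j hij
    simp [ha, hA i j hij]
  -- diagonal entries of D
  have hdiag : ∀ i, D i i = (((∑ j, a i j) - ∑ j, a j i : ℝ) : ℂ) := by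
    intro i
    simp only [hD, Matrix.sub_apply, Matrix.mul_apply, Matrix.conjTranspose_apply]
    push_cast [Finset.sum_sub_distrib]
    congr 1 <;> refine Finset.sum_congr rfl fun j _ => ?_
    · rw [ha]; simp [Complex.sq_norm, Complex.mul_conj]
    · rw [ha]; simp [Complex.sq_norm, mul_comm, Complex.mul_conj]
  -- each diagonal entry is bounded by N
  have hRle : ∀ i, |(∑ j, a i j) - ∑ j, a j i| ≤ N := by
    intro i
    have h1 : ‖D i i‖ ^ 2 ≤ ∑ p, ∑ q, ‖D p q‖ ^ 2 := by
      calc ‖D i i‖ ^ 2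
          ≤ ∑ q, ‖D i q‖ ^ 2 :=
            Finset.single_le_sum (f := fun q => ‖D i q‖ ^ 2)
              (fun q _ => by positivity) (Finset.mem_univ i)
        _ ≤ ∑ p, ∑ q, ‖D p q‖ ^ 2 :=
            Finset.single_le_sum (f := fun p => ∑ q, ‖D p q‖ ^ 2)
              (fun p _ => Finset.sum_nonneg fun q _ => by positivity)
              (Finset.mem_univ i)
    have h2 : ‖D i i‖ ≤ N := by
      have := Real.sqrt_le_sqrt h1
      rwa [Real.sqrt_sq (norm_nonneg _)] at this
    rwa [hdiag i, Complex.norm_real, Real.norm_eq_abs] at h2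
  -- pointwise combinatorial identity
  have hpt : ∀ (k i j : Fin r),
      (if i ≤ k then a i j else 0) - (if j ≤ k then a i j else 0)
        = -(if j ≤ k ∧ k < i then a i j else 0) := by
    intro k i j
    by_cases hik : i ≤ k <;> by_cases hjk : j ≤ k
    · simp [hik, hjk, not_lt.mpr hik]
    · have hij : i < j := lt_of_le_of_lt hik (not_le.mp hjk)
      simp [hik, hjk, haz i j hij]
    · simp [hik, hjk, not_le.mp hik]
    · simp [hik, hjk]
  -- each block sum is at most r * N
  have hSk : ∀ k : Fin r,
      ∑ i, ∑ j, (if j ≤ k ∧ k < i then a i j else 0) ≤ r * N := by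
    intro k
    have step1 : ∑ i, ∑ j, (if j ≤ k ∧ k < i then a i j else 0)
        = -(∑ i, (if i ≤ k then ((∑ j, a i j) - ∑ j, a j i) else 0)) := by
      have e1 : ∀ i, (if i ≤ k then ((∑ j, a i j) - ∑ j, a j i) else 0)
          = (∑ j, if i ≤ k then a i j else 0) - (∑ j, if i ≤ k then a j i else 0) := by
        intro i
        by_cases hik : i ≤ k <;> simp [hik, Finset.sum_sub_distrib]
      calc ∑ i, ∑ j, (if j ≤ k ∧ k < i then a i j else 0)
          = -∑ i, ∑ j, ((if i ≤ k then a i j else 0) - (if j ≤ k then a i j else 0)) := by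
            rw [← Finset.sum_neg_distrib]
            refine Finset.sum_congr rfl fun i _ => ?_
            rw [← Finset.sum_neg_distrib]
            refine Finset.sum_congr rfl fun j _ => ?_
            rw [hpt k i j, neg_neg]

        _ = -∑ i, ((∑ j, if i ≤ k then a i j else 0) - (∑ j, if j ≤ k then a i j else 0)) := by
            rw [neg_inj]
            exact Finset.sum_congr rfl fun i _ => Finset.sum_sub_distrib _ _
        _ = -((∑ i, ∑ j, if i ≤ k then a i j else 0)
              - (∑ i, ∑ j, if j ≤ k then a i j else 0)) := by
            rw [Finset.sum_sub_distrib]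
        _ = -((∑ i, ∑ j, if i ≤ k then a i j else 0)
              - (∑ i, ∑ j, if i ≤ k then a j i else 0)) := by
            congr 2
            exact Finset.sum_comm
        _ = -(∑ i, (if i ≤ k then ((∑ j, a i j) - ∑ j, a j i) else 0)) := by
            rw [← Finset.sum_sub_distrib]
            rw [neg_inj]
            exact Finset.sum_congr rfl fun i _ => (e1 i).symm
    rw [step1]
    have hbd : ∀ i : Fin r,
        -(if i ≤ k then ((∑ j, a i j) - ∑ j, a j i) else 0) ≤ N := by
      intro i
      by_cases hik : i ≤ k
      · simp only [hik, if_true]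
        calc -((∑ j, a i j) - ∑ j, a j i) ≤ |(∑ j, a i j) - ∑ j, a j i| := neg_le_abs _
          _ ≤ N := hRle i
      · simpa [hik] using hNnn
    calc -(∑ i, (if i ≤ k then ((∑ j, a i j) - ∑ j, a j i) else 0))
        = ∑ i : Fin r, -(if i ≤ k then ((∑ j, a i j) - ∑ j, a j i) else 0) := by
          rw [Finset.sum_neg_distrib]
      _ ≤ ∑ _i : Fin r, N := Finset.sum_le_sum fun i _ => hbd i
      _ = r * N := by simp [Finset.sum_const, Finset.card_univ, nsmul_eq_mul]
  -- the Frobenius norm of the strictly lower part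
  have hfrob : frobNorm (fun i j => if i = j then (0:ℂ) else A i j) ^ 2
      = ∑ i, ∑ j, (if j < i then a i j else 0) := by
    unfold frobNorm
    rw [Real.sq_sqrt (Finset.sum_nonneg fun i _ =>
      Finset.sum_nonneg fun j _ => by positivity)]
    refine Finset.sum_congr rfl fun i _ => Finset.sum_congr rfl fun j _ => ?_
    rcases lt_trichotomy i j with h | h | h
    · simp [ne_of_lt h, not_lt.mpr (le_of_lt h), hA i j h]
    · simp [h]
    · simp [ne_of_gt h, h, ha]
  -- each strictly lower entry is covered by at least one block
  have hcount : ∀ i j : Fin r, (if j < i then a i j else 0)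
      ≤ ∑ k, (if j ≤ k ∧ k < i then a i j else 0) := by
    intro i j
    by_cases h : j < i
    · have h1 : (fun k => if j ≤ k ∧ k < i then a i j else 0) j
          ≤ ∑ k, (if j ≤ k ∧ k < i then a i j else 0) :=
        Finset.single_le_sum (f := fun k => if j ≤ k ∧ k < i then a i j else 0)
          (fun k _ => by split <;> [exact hann i j; exact le_refl 0])
          (Finset.mem_univ j)
      simpa [h, le_refl] using h1
    · simp only [h, if_false]
      exact Finset.sum_nonneg fun k _ =>
        by split <;> [exact hann i j; exact le_refl 0]
  -- put everything together
  have main : frobNorm (fun i j => if i = j then (0:ℂ) else A i j) ^ 2 ≤ (r:ℝ)^2 * N := by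
    calc frobNorm (fun i j => if i = j then (0:ℂ) else A i j) ^ 2
        = ∑ i, ∑ j, (if j < i then a i j else 0) := hfrob
      _ ≤ ∑ i, ∑ j, ∑ k, (if j ≤ k ∧ k < i then a i j else 0) :=
          Finset.sum_le_sum fun i _ => Finset.sum_le_sum fun j _ => hcount i j
      _ = ∑ i, ∑ k, ∑ j, (if j ≤ k ∧ k < i then a i j else 0) :=
          Finset.sum_congr rfl fun i _ => Finset.sum_comm
      _ = ∑ k, ∑ i, ∑ j, (if j ≤ k ∧ k < i then a i j else 0) := Finset.sum_comm
      _ ≤ ∑ _k : Fin r, ((r:ℝ) * N) := Finset.sum_le_sum fun k _ => hSk k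
      _ = (r:ℝ)^2 * N := by
          simp [Finset.sum_const, Finset.card_univ, nsmul_eq_mul]; ring
  rw [inv_mul_le_iff₀ (by positivity)]
  exact main
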